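/- Let Ω be a topological space, X a seminormed space with seminorm p, W ⊆ F(Ω, X), f : Ω → X, and v : Ω → ℝ≥0 such that the closure of (v·f)(Ω) is compact. Then inf_{g ∈ W} sup_{x ∈ Ω} p(v(x)f(x) − v(x)g(x)) = 0 if and only if for every ε > 0 and every finite list x₁, …, xₙ ∈ X there exists g ∈ W such that for all x ∈ Ω and all i, p(v(x)f(x) − xᵢ) < ε implies p(v(x)g(x) − xᵢ) < 2ε. -/

import Mathlib

open scoped ENNReal

theorem stmt_5 {Ω X : Type*} [TopologicalSpace Ω] [SeminormedAddCommGroup X]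
    [NormedSpace ℝ X] (W : Set (Ω → X)) (f : Ω → X) (v : Ω → ℝ)
    (hv : ∀ x, 0 ≤ v x)
    (hcpt : IsCompact (closure (Set.range fun x => v x • f x))) :
    (⨅ g ∈ W, ⨆ x : Ω, (‖v x • f x - v x • g x‖₊ : ℝ≥0∞)) = 0 ↔
      ∀ ε > (0 : ℝ), ∀ xs : List X, ∃ g ∈ W, ∀ x : Ω, ∀ xi ∈ xs,
        ‖v x • f x - xi‖ < ε → ‖v x • g x - xi‖ < 2 * ε := by
  constructor
  · intro h ε hε xs
    have h' : (⨅ g ∈ W, ⨆ x : Ω, (‖v x • f x - v x • g x‖₊ : ℝ≥0∞)) <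
        ENNReal.ofReal ε := by
      rw [h]; simpa using hε
    simp only [iInf_lt_iff] at h'
    obtain ⟨g, hgW, hg⟩ := h'
    refine ⟨g, hgW, fun x xi hxi hfx => ?_⟩
    have hx : (‖v x • f x - v x • g x‖₊ : ℝ≥0∞) < ENNReal.ofReal ε :=
      lt_of_le_of_lt (le_iSup (fun x => ((‖v x • f x - v x • g x‖₊ : ℝ≥0∞))) x) hg
    rw [← ENNReal.ofReal_coe_nnreal (p := ‖v x • f x - v x • g x‖₊), coe_nnnorm,
      ENNReal.ofReal_lt_ofReal_iff hε] at hx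
    have htri : ‖v x • g x - xi‖ ≤ ‖v x • g x - v x • f x‖ + ‖v x • f x - xi‖ := by
      simpa [sub_add_sub_cancel] using norm_add_le (v x • g x - v x • f x) (v x • f x - xi)
    rw [norm_sub_rev (v x • g x) (v x • f x)] at htri
    linarith
  · intro h
    refine le_antisymm ?_ zero_le
    refine ENNReal.le_of_forall_pos_le_add fun δ hδ _ => ?_
    rw [zero_add]
    set ε : ℝ := (δ : ℝ) / 3 with hεdef
    have hε : 0 < ε := by positivity
    obtain ⟨t, htfin, hcover⟩ :=
      (Metric.totallyBounded_iff.mp hcpt.totallyBounded) ε hε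
    set xs : List X := htfin.toFinset.toList with hxs
    obtain ⟨g, hgW, hg⟩ := h ε hε xs
    refine le_trans (iInf₂_le g hgW) ?_
    refine iSup_le fun x => ?_
    have hmem : v x • f x ∈ closure (Set.range fun x => v x • f x) :=
      subset_closure ⟨x, rfl⟩
    have hmem2 := hcover hmem
    simp only [Set.mem_iUnion, Metric.mem_ball, exists_prop] at hmem2
    obtain ⟨y, hyt, hy⟩ := hmem2
    have hy' : ‖v x • f x - y‖ < ε := by rwa [← dist_eq_norm]
    have h2 : ‖v x • g x - y‖ < 2 * ε :=
      hg x y (by simpa [hxs, htfin.mem_toFinset] using hyt) hy'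
    have htri : ‖v x • f x - v x • g x‖ ≤ ‖v x • f x - y‖ + ‖y - v x • g x‖ := by
      simpa [sub_add_sub_cancel] using norm_add_le (v x • f x - y) (y - v x • g x)
    rw [norm_sub_rev y] at htri
    have hle : ‖v x • f x - v x • g x‖ ≤ (δ : ℝ) := by
      rw [hεdef] at hy' h2; linarith
    have : ‖v x • f x - v x • g x‖₊ ≤ δ := by
      rwa [← NNReal.coe_le_coe, coe_nnnorm]
    exact_mod_cast this
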